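/- With H, H', C_q, C_q^Lsh as above: if the strictness condition C_q ∩ (q−1)H = (q−1)C_q holds, then C_q^Lsh ∩ (q−1)H' = (q−1)·C_q^Lsh. -/

import Mathlib

/- STATEMENT 12: if the left coideal subalgebra C_q ⊆ H is strict, i.e.
   C_q ∩ (q−1)H = (q−1)C_q, then its Drinfeld-type transform is strict as well:
   C_q^Lsh ∩ (q−1)H' = (q−1)·C_q^Lsh. -/

open scoped TensorProduct
open PiTensorProduct

namespace GQDP

/-- The ground ring `ℂ[q,q⁻¹]` of complex Laurent polynomials. -/
abbrev R : Type := LaurentPolynomial ℂ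

/-- The indeterminate `q`. -/
noncomputable def q : R := LaurentPolynomial.T 1

variable (H : Type*) [Ring H] [HopfAlgebra R H] [NoZeroSMulDivisors R H]

/-- The `n`-fold tensor power `H^{⊗n}`. -/
abbrev TP (n : ℕ) := ⨂[R] (_ : Fin n), H

/-- The "tensor product" of two `R`-submodules of `H` inside `H ⊗[R] H`. -/
noncomputable def tsub (A B : Submodule R H) : Submodule R (H ⊗[R] H) :=
  Submodule.span R {z | ∃ a ∈ A, ∃ b ∈ B, z = a ⊗ₜ[R] b}

/-- The "tensor product" of a family of submodules `p i ⊆ H` inside `H^{⊗n}`: the additive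
    subgroup generated by the pure tensors with `i`-th entry in `p i` (for `n ≥ 1` this
    coincides with the `R`-span of such pure tensors). -/
noncomputable def tgrp {n : ℕ} (p : Fin n → Submodule R H) : AddSubgroup (TP H n) :=
  AddSubgroup.closure {z | ∃ f : Fin n → H, (∀ i, f i ∈ p i) ∧ z = PiTensorProduct.tprod R f}

/-- The canonical map `H ⊗ H^{⊗n} → H^{⊗(n+1)}`. -/
noncomputable def step (n : ℕ) : (H ⊗[R] TP H n) →ₗ[R] TP H (n + 1) :=
  ((PiTensorProduct.reindex R (fun _ : Fin 1 ⊕ Fin n => H)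
      (finSumFinEquiv.trans (finCongr (Nat.add_comm 1 n)))).toLinearMap
    ∘ₗ (PiTensorProduct.tmulEquiv (ι := Fin 1) (ι₂ := Fin n) R H).toLinearMap)
    ∘ₗ (LinearMap.rTensor (TP H n)
      (PiTensorProduct.subsingletonEquiv (0 : Fin 1) : (⨂[R] (_ : Fin 1), H) ≃ₗ[R] H).symm.toLinearMap)

/-- The iterated coproduct `Δⁿ : H → H^{⊗n}`, with `Δ⁰ := ε` and `Δ^{n+1} := (id ⊗ Δⁿ) ∘ Δ`. -/
noncomputable def DeltaIter : (n : ℕ) → H →ₗ[R] TP H n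
  | 0 => (PiTensorProduct.isEmptyEquiv (ι := Fin 0)).symm.toLinearMap
          ∘ₗ (Coalgebra.counit : H →ₗ[R] R)
  | n + 1 => step H n ∘ₗ LinearMap.lTensor H (DeltaIter n)
              ∘ₗ (Coalgebra.comul : H →ₗ[R] H ⊗[R] H)

/-- `δ_n := (id − η∘ε)^{⊗n} ∘ Δⁿ : H → H^{⊗n}`. -/
noncomputable def deltaN (n : ℕ) : H →ₗ[R] TP H n :=
  (PiTensorProduct.map fun _ =>
      (LinearMap.id : H →ₗ[R] H) - Algebra.linearMap R H ∘ₗ (Coalgebra.counit : H →ₗ[R] R))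
    ∘ₗ DeltaIter H n

/-- Drinfeld's subalgebra `H' = { a ∈ H | δ_n(a) ∈ (q−1)ⁿ H^{⊗n} for all n }`. -/
noncomputable def Hprime : Set H :=
  {a | ∀ n : ℕ, ∃ y : TP H n, deltaN H n a = ((q - 1) ^ n) • y}

/-- The Drinfeld-type transform `C^Lsh := { x ∈ C | δ_n(x) ∈ (q−1)ⁿ H^{⊗(n−1)} ⊗ C, ∀ n ≥ 1 }`. -/
noncomputable def Lsh (C : Submodule R H) : Set H :=
  {x | x ∈ C ∧ ∀ n : ℕ,
    ∃ y ∈ tgrp H (fun i : Fin (n + 1) => if i = Fin.last n then C else ⊤),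
      deltaN H (n + 1) x = ((q - 1) ^ (n + 1)) • y}

set_option linter.unusedSectionVars false
set_option linter.unusedVariables false
set_option maxHeartbeats 1000000
set_option synthInstance.maxHeartbeats 400000

lemma q_sub_one_ne_zero : q - 1 ≠ 0 := by
  intro h
  have h1 : q = 1 := by linear_combination h
  unfold q at h1
  rw [show (1 : R) = LaurentPolynomial.T 0 from (LaurentPolynomial.T_zero).symm,
    LaurentPolynomial.T, LaurentPolynomial.T] at h1
  have := (AddMonoidAlgebra.single_left_injective (one_ne_zero) h1)
  norm_num at this

instance : IsDomain R := NoZeroDivisors.to_isDomain _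

instance : IsPrincipalIdealRing R := by
  constructor
  intro J
  haveI := LaurentPolynomial.isLocalization (R := ℂ)
  obtain ⟨a, ha⟩ := (IsPrincipalIdealRing.principal
    (Ideal.comap (algebraMap (Polynomial ℂ) R) J)).principal
  have hmc := IsLocalization.map_comap (Submonoid.powers (Polynomial.X : Polynomial ℂ)) R J
  refine ⟨⟨algebraMap (Polynomial ℂ) R a, ?_⟩⟩
  rw [← hmc]
  rw [Ideal.submodule_span_eq] at ha ⊢
  rw [show Ideal.under (Polynomial ℂ) J = Ideal.span {a} from ha]
  rw [Ideal.map_span]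
  simp

lemma flat_of_torsionFree (M : Type*) [AddCommGroup M] [Module R M]
    [NoZeroSMulDivisors R M] : Module.Flat R M := by
  rw [Module.Flat.iff_rTensor_injective]
  intro I _
  obtain ⟨r, hr⟩ := (IsPrincipalIdealRing.principal I).principal
  rw [Ideal.submodule_span_eq] at hr
  rcases eq_or_ne r 0 with h0 | h0
  · subst h0
    have hI : I = ⊥ := by rw [hr]; exact Ideal.span_singleton_eq_bot.mpr rfl
    haveI : Subsingleton I := by
      refine ⟨fun a b => Subtype.ext ?_⟩
      have ha : (a : R) ∈ (⊥ : Ideal R) := by rw [← hI]; exact a.2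
      have hb : (b : R) ∈ (⊥ : Ideal R) := by rw [← hI]; exact b.2
      rw [Ideal.mem_bot] at ha hb
      rw [ha, hb]
    haveI : Subsingleton (↥I ⊗[R] M) := by infer_instance
    exact Function.injective_of_subsingleton _
  · set e : R ≃ₗ[R] I :=
      (LinearEquiv.toSpanNonzeroSingleton R R r h0).trans
        (LinearEquiv.ofEq _ _ (by rw [hr])) with he
    have hcomp : I.subtype ∘ₗ (e : R →ₗ[R] I) = LinearMap.toSpanSingleton R R r := by
      apply LinearMap.ext_ring
      simp only [he, LinearMap.coe_comp, LinearEquiv.coe_coe, Function.comp_apply,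
        LinearEquiv.trans_apply, LinearEquiv.toSpanNonzeroSingleton_one,
Submodule.coe_subtype, LinearMap.toSpanSingleton_apply,
        one_smul, LinearEquiv.coe_ofEq_apply]
    have hsurj : Function.Surjective (LinearMap.rTensor M (e : R →ₗ[R] I)) :=
      LinearMap.rTensor_surjective M (EquivLike.surjective e)
    have hlid : ∀ z : R ⊗[R] M,
        (TensorProduct.lid R M) (LinearMap.rTensor M (LinearMap.toSpanSingleton R R r) z)
          = r • (TensorProduct.lid R M z) := by
      intro z
      induction z using TensorProduct.induction_on with
      | zero => simp
      | tmul t m => simp [LinearMap.toSpanSingleton_apply, smul_smul, mul_comm]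
      | add a b ha hb => simp [map_add, ha, hb]
    intro x y hxy
    obtain ⟨x', rfl⟩ := hsurj x
    obtain ⟨y', rfl⟩ := hsurj y
    rw [← LinearMap.rTensor_comp_apply, ← LinearMap.rTensor_comp_apply, hcomp] at hxy
    have h2 : r • (TensorProduct.lid R M x') = r • (TensorProduct.lid R M y') := by
      rw [← hlid, ← hlid, hxy]
    have h3 := smul_right_injective M h0 h2
    congr 1
    exact (TensorProduct.lid R M).injective h3


noncomputable def lastEquiv (n : ℕ) : TP H (n + 1) ≃ₗ[R] (TP H n) ⊗[R] H :=
  (PiTensorProduct.reindex R (fun _ : Fin (n + 1) => H) finSumFinEquiv.symm).trans <|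
    ((PiTensorProduct.tmulEquiv (ι := Fin n) (ι₂ := Fin 1) R H).symm).trans
      (TensorProduct.congr (LinearEquiv.refl R (TP H n))
        (PiTensorProduct.subsingletonEquiv (0 : Fin 1)))

lemma lastEquiv_tprod (n : ℕ) (f : Fin (n + 1) → H) :
    lastEquiv H n (tprod R f) =
      (tprod R (fun i : Fin n => f (Fin.castSucc i))) ⊗ₜ[R] f (Fin.last n) := by
  have h1 : (PiTensorProduct.reindex R (fun _ : Fin (n + 1) => H) finSumFinEquiv.symm)
      (tprod R f) = tprod R (fun i : Fin n ⊕ Fin 1 => f (finSumFinEquiv i)) := by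
    rw [PiTensorProduct.reindex_tprod]
    simp
  rw [lastEquiv, LinearEquiv.trans_apply, LinearEquiv.trans_apply, h1,
    PiTensorProduct.tmulEquiv_symm_apply, TensorProduct.congr_tmul,
    LinearEquiv.refl_apply, PiTensorProduct.subsingletonEquiv_apply_tprod]
  have e1 : ∀ i : Fin n, finSumFinEquiv (Sum.inl i) = Fin.castSucc i := by
    intro i; rw [finSumFinEquiv_apply_left]; rfl
  have e2 : finSumFinEquiv (Sum.inr (0 : Fin 1)) = Fin.last n := by
    rw [finSumFinEquiv_apply_right]; ext; simp
  rw [e2]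
  exact congrArg (· ⊗ₜ[R] f (Fin.last n)) (congrArg (PiTensorProduct.tprod R) (funext fun i => congrArg f (e1 i)))


lemma lastEquiv_symm_tmul (n : ℕ) (g : Fin n → H) (c : H) :
    (lastEquiv H n).symm ((PiTensorProduct.tprod R g) ⊗ₜ[R] c) =
      PiTensorProduct.tprod R
        (fun i : Fin (n + 1) => Sum.elim g (fun _ : Fin 1 => c) (finSumFinEquiv.symm i)) := by
  rw [LinearEquiv.symm_apply_eq, lastEquiv_tprod]
  have e1 : ∀ i : Fin n, finSumFinEquiv.symm (Fin.castSucc i) = Sum.inl i := by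
    intro i
    rw [Equiv.symm_apply_eq, finSumFinEquiv_apply_left]
    rfl
  have e2 : finSumFinEquiv.symm (Fin.last n) = Sum.inr (0 : Fin 1) := by
    rw [Equiv.symm_apply_eq, finSumFinEquiv_apply_right]
    ext
    simp
  rw [e2]
  exact congrArg (· ⊗ₜ[R] c)
    (congrArg (PiTensorProduct.tprod R) (funext fun i => by rw [e1 i]; rfl)).symm |>.symm

lemma tgrp_smul_mem {n : ℕ} (p : Fin (n + 1) → Submodule R H) (r : R) {w : TP H (n + 1)}
    (hw : w ∈ tgrp H p) : r • w ∈ tgrp H p := by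
  refine AddSubgroup.closure_induction ?_ ?_ ?_ ?_ hw
  · rintro z ⟨f, hf, rfl⟩
    apply AddSubgroup.subset_closure
    refine ⟨Function.update f 0 (r • f 0), ?_, ?_⟩
    · intro i
      rcases eq_or_ne i 0 with h | h
      · subst h
        rw [Function.update_self]
        exact Submodule.smul_mem _ _ (hf 0)
      · rw [Function.update_of_ne h]
        exact hf i
    · rw [MultilinearMap.map_update_smul (PiTensorProduct.tprod R) f 0 r (f 0)]
      rw [Function.update_eq_self]
  · rw [smul_zero]; exact AddSubgroup.zero_mem _
  · intro a b _ _ ha hb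
    rw [smul_add]; exact AddSubgroup.add_mem _ ha hb
  · intro a _ ha
    rw [smul_neg]; exact AddSubgroup.neg_mem _ ha

lemma mem_tgrp_iff {n : ℕ} (p : Fin (n + 1) → Submodule R H) (w : TP H (n + 1)) :
    w ∈ tgrp H p ↔ w ∈ Submodule.span R
      {z | ∃ f : Fin (n + 1) → H, (∀ i, f i ∈ p i) ∧ z = PiTensorProduct.tprod R f} := by
  constructor
  · intro hw
    refine AddSubgroup.closure_induction (fun z hz => Submodule.subset_span hz)
      (Submodule.zero_mem _) (fun a b _ _ ha hb => Submodule.add_mem _ ha hb)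
      (fun a _ ha => Submodule.neg_mem _ ha) hw
  · intro hw
    refine Submodule.span_induction (fun z hz => AddSubgroup.subset_closure hz)
      (AddSubgroup.zero_mem _) (fun a b _ _ ha hb => AddSubgroup.add_mem _ ha hb)
      (fun r a _ ha => tgrp_smul_mem H p r ha) hw

lemma TP_flat_and_tf : ∀ n : ℕ, Module.Flat R (TP H n) ∧ NoZeroSMulDivisors R (TP H n) := by
  intro n
  induction n with
  | zero =>
    constructor
    · exact Module.Flat.of_linearEquiv (PiTensorProduct.isEmptyEquiv (Fin 0))
    · exact Function.Injective.noZeroSMulDivisors (PiTensorProduct.isEmptyEquiv (Fin 0))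
        (PiTensorProduct.isEmptyEquiv (Fin 0)).injective (map_zero _) (fun c x => map_smul _ c x)
  | succ n ih =>
    haveI := ih.1
    haveI := ih.2
    haveI : Module.Flat R H := flat_of_torsionFree H
    haveI htensor : NoZeroSMulDivisors R ((TP H n) ⊗[R] H) := by
      constructor
      intro r x hrx
      rcases eq_or_ne r 0 with h | h
      · exact Or.inl h
      · refine Or.inr ?_
        have hinj : Function.Injective
            (LinearMap.rTensor H ((r • LinearMap.id) : TP H n →ₗ[R] TP H n)) := by
          apply Module.Flat.rTensor_preserves_injective_linearMap
          intro a b hab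
          simp only [LinearMap.smul_apply, LinearMap.id_apply] at hab
          exact smul_right_injective _ h hab
        have key : ∀ z : (TP H n) ⊗[R] H,
            LinearMap.rTensor H ((r • LinearMap.id) : TP H n →ₗ[R] TP H n) z = r • z := by
          intro z
          induction z using TensorProduct.induction_on with
          | zero => simp
          | tmul a b => simp [TensorProduct.smul_tmul']
          | add a b ha hb => rw [map_add, ha, hb, smul_add]
        apply hinj
        rw [key, hrx, map_zero]
    constructor
    · exact Module.Flat.of_linearEquiv (lastEquiv H n)
    · exact Function.Injective.noZeroSMulDivisors (lastEquiv H n)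
        (lastEquiv H n).injective (map_zero _) (fun c x => map_smul _ c x)

noncomputable def Tsp (M : Type*) [AddCommGroup M] [Module R M] (C' : Submodule R H) :
    Submodule R (M ⊗[R] H) :=
  Submodule.span R {z | ∃ m : M, ∃ c ∈ C', z = m ⊗ₜ[R] c}

lemma Tsp_eq_range (M : Type*) [AddCommGroup M] [Module R M] (C' : Submodule R H) :
    Tsp H M C' = LinearMap.range (LinearMap.lTensor M C'.subtype) := by
  apply le_antisymm
  · rw [Tsp, Submodule.span_le]
    rintro z ⟨m, c, hc, rfl⟩
    exact ⟨m ⊗ₜ[R] ⟨c, hc⟩, rfl⟩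
  · rintro z ⟨u, rfl⟩
    induction u using TensorProduct.induction_on with
    | zero => rw [map_zero]; exact Submodule.zero_mem _
    | tmul m c => exact Submodule.subset_span ⟨m, c, c.2, rfl⟩
    | add a b ha hb => rw [map_add]; exact Submodule.add_mem _ ha hb

lemma keystep (M : Type*) [AddCommGroup M] [Module R M] [Module.Flat R M]
    (C' : Submodule R H)
    (hs : ∀ x : H, x ∈ C' → (∃ h : H, x = (q - 1) • h) → ∃ c ∈ C', x = (q - 1) • c)
    (u : M ⊗[R] H) (hu : u ∈ Tsp H M C') (v : M ⊗[R] H) (huv : u = (q - 1) • v) :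
    ∃ u'' ∈ Tsp H M C', u = (q - 1) • u'' := by
  classical
  set D : Submodule R C' := LinearMap.range ((q - 1) • (LinearMap.id : C' →ₗ[R] C')) with hD
  set QH : Submodule R H := LinearMap.range ((q - 1) • (LinearMap.id : H →ₗ[R] H)) with hQH
  have hker : D ≤ LinearMap.ker (QH.mkQ ∘ₗ C'.subtype) := by
    rintro d ⟨c, rfl⟩
    simp only [LinearMap.mem_ker, LinearMap.comp_apply, Submodule.mkQ_apply,
      Submodule.Quotient.mk_eq_zero, LinearMap.smul_apply, LinearMap.id_apply]
    exact ⟨(c : H), by simp [Submodule.coe_smul]⟩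
  set j : (C' ⧸ D) →ₗ[R] (H ⧸ QH) := D.liftQ (QH.mkQ ∘ₗ C'.subtype) hker with hj
  have hjinj : Function.Injective j := by
    rw [← LinearMap.ker_eq_bot, hj]
    apply Submodule.ker_liftQ_eq_bot
    intro c hc
    rw [LinearMap.mem_ker, LinearMap.comp_apply, Submodule.mkQ_apply,
      Submodule.Quotient.mk_eq_zero] at hc
    obtain ⟨h, hh⟩ := hc
    simp only [LinearMap.smul_apply, LinearMap.id_apply] at hh
    obtain ⟨c', hc', hcc⟩ := hs (c : H) c.2 ⟨h, hh.symm⟩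
    refine ⟨⟨c', hc'⟩, ?_⟩
    simp only [LinearMap.smul_apply, LinearMap.id_apply]
    exact Subtype.ext (by simpa using hcc.symm)
  rw [Tsp_eq_range] at hu
  obtain ⟨u₀, hu₀⟩ := hu
  have h1 : LinearMap.lTensor M QH.mkQ u = 0 := by
    have hz : ((q - 1) : R) • QH.mkQ = (0 : H →ₗ[R] H ⧸ QH) := by
      ext h
      simp only [LinearMap.smul_apply, Submodule.mkQ_apply, LinearMap.zero_apply,
        ← Submodule.Quotient.mk_smul, Submodule.Quotient.mk_eq_zero]
      exact ⟨h, by simp⟩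
    rw [huv, map_smul, ← LinearMap.smul_apply, ← LinearMap.lTensor_smul, hz]
    simp
  have h2 : LinearMap.lTensor M D.mkQ u₀ = 0 := by
    apply Module.Flat.lTensor_preserves_injective_linearMap j hjinj
    rw [map_zero, ← LinearMap.lTensor_comp_apply]
    have hcomp : j ∘ₗ D.mkQ = QH.mkQ ∘ₗ C'.subtype := Submodule.liftQ_mkQ _ _ _
    rw [hcomp, LinearMap.lTensor_comp_apply, hu₀, h1]
  have hex := Module.Flat.lTensor_exact (R := R) (N := D) (N' := C') M (f := D.subtype) (LinearMap.exact_subtype_mkQ D)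
  have hmem := (hex u₀).mp h2
  obtain ⟨t, ht⟩ := hmem
  have main : ∀ t : M ⊗[R] D, ∃ u'' ∈ Tsp H M C',
      LinearMap.lTensor M C'.subtype (LinearMap.lTensor M D.subtype t) = (q - 1) • u'' := by
    intro t
    induction t using TensorProduct.induction_on with
    | zero => exact ⟨0, Submodule.zero_mem _, by simp⟩
    | tmul m d =>
      obtain ⟨c, hcd⟩ := d.2
      simp only [LinearMap.smul_apply, LinearMap.id_apply] at hcd
      refine ⟨m ⊗ₜ[R] (c : H), Submodule.subset_span ⟨m, c, c.2, rfl⟩, ?_⟩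
      rw [LinearMap.lTensor_tmul, LinearMap.lTensor_tmul]
      simp only [Submodule.coe_subtype]
      rw [show ((d : C') : H) = (q - 1) • (c : H) from by rw [← hcd]; simp,
        TensorProduct.tmul_smul]
    | add a b ha hb =>
      obtain ⟨ua, hua, ha'⟩ := ha
      obtain ⟨ub, hub, hb'⟩ := hb
      exact ⟨ua + ub, Submodule.add_mem _ hua hub,
        by rw [map_add, map_add, ha', hb', smul_add]⟩
  obtain ⟨u'', hu'', heq⟩ := main t
  refine ⟨u'', hu'', ?_⟩
  rw [← hu₀, ← ht, heq]

lemma lastEquiv_mem_Tsp {n : ℕ} (C' : Submodule R H) {w : TP H (n + 1)}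
    (hw : w ∈ tgrp H (fun i : Fin (n + 1) => if i = Fin.last n then C' else ⊤)) :
    lastEquiv H n w ∈ Tsp H (TP H n) C' := by
  rw [mem_tgrp_iff] at hw
  refine Submodule.span_induction ?_ ?_ ?_ ?_ hw
  · rintro z ⟨f, hf, rfl⟩
    rw [lastEquiv_tprod]
    refine Submodule.subset_span ⟨_, f (Fin.last n), ?_, rfl⟩
    have := hf (Fin.last n)
    simpa using this
  · rw [map_zero]; exact Submodule.zero_mem _
  · intro a b _ _ ha hb
    rw [map_add]; exact Submodule.add_mem _ ha hb
  · intro r a _ ha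
    rw [map_smul]; exact Submodule.smul_mem _ r ha

lemma symm_mem_tgrp {n : ℕ} (C' : Submodule R H) {u : (TP H n) ⊗[R] H}
    (hu : u ∈ Tsp H (TP H n) C') :
    (lastEquiv H n).symm u ∈ tgrp H (fun i : Fin (n + 1) => if i = Fin.last n then C' else ⊤) := by
  have key : ∀ c : H, c ∈ C' → ∀ m : TP H n,
      (lastEquiv H n).symm (m ⊗ₜ[R] c) ∈
        tgrp H (fun i : Fin (n + 1) => if i = Fin.last n then C' else ⊤) := by
    intro c hc m
    have hm : m ∈ Submodule.span R (Set.range (PiTensorProduct.tprod R)) := by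
      rw [PiTensorProduct.span_tprod_eq_top]; trivial
    refine Submodule.span_induction ?_ ?_ ?_ ?_ hm
    · rintro z ⟨g, rfl⟩
      rw [lastEquiv_symm_tmul]
      apply AddSubgroup.subset_closure
      refine ⟨_, ?_, rfl⟩
      intro i
      show Sum.elim g (fun _ : Fin 1 => c) (finSumFinEquiv.symm i) ∈
        (if i = Fin.last n then C' else ⊤)
      rcases eq_or_ne i (Fin.last n) with h | h
      · subst h
        have e2 : finSumFinEquiv.symm (Fin.last n) = Sum.inr (0 : Fin 1) := by
          rw [Equiv.symm_apply_eq, finSumFinEquiv_apply_right]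
          ext
          simp
        rw [if_pos rfl, e2]
        exact hc
      · rw [if_neg h]
        trivial
    · rw [TensorProduct.zero_tmul, map_zero]
      exact AddSubgroup.zero_mem _
    · intro a b _ _ ha hb
      rw [TensorProduct.add_tmul, map_add]
      exact AddSubgroup.add_mem _ ha hb
    · intro r a _ ha
      rw [← TensorProduct.smul_tmul', map_smul]
      exact tgrp_smul_mem H _ r ha
  refine Submodule.span_induction ?_ ?_ ?_ ?_ hu
  · rintro z ⟨m, c, hc, rfl⟩
    exact key c hc m
  · rw [map_zero]; exact AddSubgroup.zero_mem _
  · intro a b _ _ ha hb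
    rw [map_add]; exact AddSubgroup.add_mem _ ha hb
  · intro r a _ ha
    rw [map_smul]; exact tgrp_smul_mem H _ r ha

/-- If `C_q` is a strict left coideal subalgebra of `H`, then
    `C_q^Lsh ∩ (q−1)H' = (q−1)·C_q^Lsh`. -/
theorem Lsh_strict_of_strict (C : Subalgebra R H)
    (hC : ∀ c ∈ C, Coalgebra.comul (R := R) c ∈ tsub H ⊤ C.toSubmodule)
    (hstrict : ∀ x : H,
      (x ∈ C ∧ ∃ y : H, x = (q - 1) • y) ↔ (∃ z ∈ C, x = (q - 1) • z)) :
    ∀ x : H,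
      (x ∈ Lsh H C.toSubmodule ∧ ∃ y ∈ Hprime H, x = (q - 1) • y) ↔
      (∃ z ∈ Lsh H C.toSubmodule, x = (q - 1) • z) := by
  have hs' : ∀ a : H, a ∈ C.toSubmodule → (∃ h : H, a = (q - 1) • h) →
      ∃ c ∈ C.toSubmodule, a = (q - 1) • c := by
    rintro a ha ⟨h, hh⟩
    obtain ⟨z, hz, hzz⟩ := (hstrict a).mp ⟨ha, h, hh⟩
    exact ⟨z, hz, hzz⟩
  intro x
  constructor
  · rintro ⟨⟨hxC, hxd⟩, y, hy, rfl⟩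
    have hyC : y ∈ C.toSubmodule := by
      obtain ⟨z, hz, hzz⟩ := hs' ((q - 1) • y) hxC ⟨y, rfl⟩
      have hyz : y = z := smul_right_injective H q_sub_one_ne_zero hzz
      rw [hyz]; exact hz
    refine ⟨y, ⟨hyC, ?_⟩, rfl⟩
    intro n
    haveI := (TP_flat_and_tf H n).1
    haveI := (TP_flat_and_tf H (n + 1)).2
    obtain ⟨w, hw, hδx⟩ := hxd n
    obtain ⟨y', hδy⟩ := hy (n + 1)
    have hδ : deltaN H (n + 1) ((q - 1) • y) = (q - 1) • deltaN H (n + 1) y :=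
      map_smul _ _ _
    have h1 : ((q - 1 : R) ^ (n + 1)) • w = ((q - 1 : R) ^ (n + 1)) • ((q - 1) • y') := by
      rw [← hδx, hδ, hδy, smul_comm]
    have hww' : w = (q - 1) • y' :=
      smul_right_injective _ (pow_ne_zero _ q_sub_one_ne_zero) h1
    have hwv : lastEquiv H n w = (q - 1) • lastEquiv H n y' := by rw [hww', map_smul]
    obtain ⟨u'', hu'', hueq⟩ := keystep H (TP H n) C.toSubmodule hs'
      (lastEquiv H n w) (lastEquiv_mem_Tsp H C.toSubmodule hw) (lastEquiv H n y') hwv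
    refine ⟨(lastEquiv H n).symm u'', symm_mem_tgrp H C.toSubmodule hu'', ?_⟩
    have hw2 : w = (q - 1) • (lastEquiv H n).symm u'' := by
      apply (lastEquiv H n).injective
      rw [map_smul, LinearEquiv.apply_symm_apply]
      exact hueq
    have h3 : (q - 1 : R) • deltaN H (n + 1) y
        = (q - 1 : R) • (((q - 1 : R) ^ (n + 1)) • (lastEquiv H n).symm u'') := by
      rw [← hδ, hδx, hw2, smul_comm ((q - 1 : R)) (((q - 1 : R)) ^ (n + 1))]
    exact smul_right_injective _ q_sub_one_ne_zero h3
  · rintro ⟨z, ⟨hzC, hzd⟩, rfl⟩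
    refine ⟨⟨Submodule.smul_mem _ _ hzC, ?_⟩, z, ?_, rfl⟩
    · intro n
      obtain ⟨w, hw, hδ⟩ := hzd n
      refine ⟨(q - 1) • w, tgrp_smul_mem H _ _ hw, ?_⟩
      rw [map_smul, hδ, smul_comm]
    · intro n
      cases n with
      | zero => exact ⟨deltaN H 0 z, by rw [pow_zero, one_smul]⟩
      | succ m =>
        obtain ⟨w, _, hδ⟩ := hzd m
        exact ⟨w, hδ⟩

end GQDP
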